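/- The ℂ-subalgebra of ℂ[t, t⁻¹] generated by t² + t⁻² + 2(t + t⁻¹) and 2 + 2t³ + 2t⁻³ is strictly contained in the subalgebra generated by t + t⁻¹. -/

import Mathlib

open LaurentPolynomial

open TrivSqZeroExt

noncomputable section

-- a cube root of unity
def cc : ℂ := (-1 + Real.sqrt 3 * Complex.I)/2

lemma hcc : cc ^ 2 + cc + 1 = 0 := by
  have h3 : ((Real.sqrt 3 : ℂ))^2 = 3 := by
    rw [← Complex.ofReal_pow, Real.sq_sqrt (by norm_num)]; norm_num
  have hI := Complex.I_sq
  unfold cc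
  linear_combination (Complex.I^2/4) * h3 + (3/4 : ℂ) * hI

lemma hcc3 : cc ^ 3 = 1 := by linear_combination (cc - 1) * hcc
lemma hcc0 : cc ≠ 0 := by intro h; have := hcc; rw [h] at this; norm_num at this
lemma hcc1 : cc ≠ 1 := by intro h; have := hcc; rw [h] at this; norm_num at this

def uu : DualNumber ℂ := inl cc + inr 1
def vv : DualNumber ℂ := inl (cc^2) + inr (-cc)

lemma huv : uu * vv = 1 := by
  ext
  · simp [uu, vv, fst_mul]
    linear_combination hcc3
  · simp [uu, vv, snd_mul, op_smul_eq_smul, smul_eq_mul]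
    ring

def UU : (DualNumber ℂ)ˣ := ⟨uu, vv, huv, by rw [mul_comm]; exact huv⟩

def φ : LaurentPolynomial ℂ →ₐ[ℂ] DualNumber ℂ :=
  AddMonoidAlgebra.lift ℂ (DualNumber ℂ) ℤ ((Units.coeHom _).comp (zpowersHom _ UU))

lemma φ_T (n : ℤ) : φ (T n) = ((UU ^ n : (DualNumber ℂ)ˣ) : DualNumber ℂ) := by
  unfold φ T
  rw [AddMonoidAlgebra.lift_single]
  simp

lemma φ_T_pos (n : ℕ) : φ (T (n:ℤ)) = uu ^ n := by
  rw [φ_T, zpow_natCast, Units.val_pow_eq_pow_val]; rfl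

lemma φ_T_neg (n : ℕ) : φ (T (-(n:ℤ))) = vv ^ n := by
  rw [φ_T, zpow_neg, zpow_natCast, ← inv_pow, Units.val_pow_eq_pow_val]; rfl

lemma φ_two : φ (2 : LaurentPolynomial ℂ) = inl (2 : ℂ) := by
  rw [show (2 : LaurentPolynomial ℂ) = algebraMap ℂ _ 2 from (map_ofNat _ 2).symm,
    AlgHom.commutes, algebraMap_eq_inl]

lemma φ_g1 : φ (T 2 + T (-2) + 2 * (T 1 + T (-1))) = algebraMap ℂ (DualNumber ℂ) (-3) := by
  have h2 : φ (T 2) = uu ^ 2 := φ_T_pos 2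
  have h2' : φ (T (-2)) = vv ^ 2 := φ_T_neg 2
  have h1 : φ (T 1) = uu ^ 1 := φ_T_pos 1
  have h1' : φ (T (-1)) = vv ^ 1 := φ_T_neg 1
  rw [map_add, map_add, map_mul, map_add, φ_two, h2, h2', h1, h1']
  ext
  · simp [uu, vv, fst_mul, pow_succ, algebraMap_eq_inl]
    ring_nf
    linear_combination 3*hcc + cc*hcc3
  · simp [uu, vv, snd_mul, fst_mul, pow_succ, op_smul_eq_smul, smul_eq_mul, algebraMap_eq_inl]
    ring_nf
    linear_combination (-2 : ℂ)*hcc3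

lemma φ_g2 : φ (2 + 2 * T 3 + 2 * T (-3)) = algebraMap ℂ (DualNumber ℂ) 6 := by
  have h3 : φ (T 3) = uu ^ 3 := φ_T_pos 3
  have h3' : φ (T (-3)) = vv ^ 3 := φ_T_neg 3
  rw [map_add, map_add, map_mul, map_mul, φ_two, h3, h3']
  ext
  · simp [uu, vv, fst_mul, pow_succ, algebraMap_eq_inl]
    ring_nf
    linear_combination (2 + 2*(cc^3+1))*hcc3
  · simp [uu, vv, snd_mul, fst_mul, pow_succ, op_smul_eq_smul, smul_eq_mul, algebraMap_eq_inl]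
    ring_nf
    linear_combination (-6*cc^2)*hcc3

lemma φ_T1 : φ (T 1) = uu := by rw [φ_T, zpow_one]; rfl
lemma φ_Tm1 : φ (T (-1)) = vv := by rw [φ_T, zpow_neg, zpow_one]; rfl

theorem stmt_4 :
    Algebra.adjoin ℂ ({T 2 + T (-2) + 2 * (T 1 + T (-1)), 2 + 2 * T 3 + 2 * T (-3)} :
        Set (LaurentPolynomial ℂ)) <
      Algebra.adjoin ℂ ({T 1 + T (-1)} : Set (LaurentPolynomial ℂ)) := by
  set s : LaurentPolynomial ℂ := T 1 + T (-1) with hs_def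
  have hXY : (T 1 : LaurentPolynomial ℂ) * T (-1) = 1 := by
    rw [← T_add]; norm_num [T_zero]
  have h2 : (T 2 : LaurentPolynomial ℂ) = T 1 * T 1 := by
    rw [show (2:ℤ) = 1 + 1 by norm_num, T_add]
  have hm2 : (T (-2) : LaurentPolynomial ℂ) = T (-1) * T (-1) := by
    rw [show (-2:ℤ) = -1 + -1 by norm_num, T_add]
  have h3 : (T 3 : LaurentPolynomial ℂ) = T 1 * T 1 * T 1 := by
    rw [show (3:ℤ) = 1 + 1 + 1 by norm_num, T_add, T_add]
  have hm3 : (T (-3) : LaurentPolynomial ℂ) = T (-1) * T (-1) * T (-1) := by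
    rw [show (-3:ℤ) = -1 + -1 + -1 by norm_num, T_add, T_add]
  have hg1 : T 2 + T (-2) + 2 * (T 1 + T (-1)) = s^2 + 2*s - 2 := by
    rw [hs_def, h2, hm2]
    linear_combination (-2 : LaurentPolynomial ℂ) * hXY
  have hg2 : (2 : LaurentPolynomial ℂ) + 2 * T 3 + 2 * T (-3) = 2*s^3 - 6*s + 2 := by
    rw [hs_def, h3, hm3]
    linear_combination (-6 * (T 1 + T (-1)) : LaurentPolynomial ℂ) * hXY
  have hsmem : s ∈ Algebra.adjoin ℂ ({s} : Set (LaurentPolynomial ℂ)) :=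
    Algebra.subset_adjoin rfl
  have h2mem : (2 : LaurentPolynomial ℂ) ∈ Algebra.adjoin ℂ ({s} : Set (LaurentPolynomial ℂ)) := by
    exact_mod_cast Subalgebra.natCast_mem _ 2
  have h6mem : (6 : LaurentPolynomial ℂ) ∈ Algebra.adjoin ℂ ({s} : Set (LaurentPolynomial ℂ)) := by
    exact_mod_cast Subalgebra.natCast_mem _ 6
  have hle : Algebra.adjoin ℂ ({T 2 + T (-2) + 2 * (T 1 + T (-1)), 2 + 2 * T 3 + 2 * T (-3)} :
        Set (LaurentPolynomial ℂ)) ≤ Algebra.adjoin ℂ ({s} : Set (LaurentPolynomial ℂ)) := by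
    apply Algebra.adjoin_le
    rintro x hx
    simp only [Set.mem_insert_iff, Set.mem_singleton_iff] at hx
    rcases hx with rfl | rfl
    · rw [hg1]
      exact sub_mem (add_mem (pow_mem hsmem 2) (mul_mem h2mem hsmem)) h2mem
    · rw [hg2]
      exact add_mem (sub_mem (mul_mem h2mem (pow_mem hsmem 3)) (mul_mem h6mem hsmem)) h2mem
  refine lt_of_le_of_ne hle (fun heq => ?_)
  have hsin : s ∈ Algebra.adjoin ℂ ({T 2 + T (-2) + 2 * (T 1 + T (-1)),
      2 + 2 * T 3 + 2 * T (-3)} : Set (LaurentPolynomial ℂ)) := by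
    rw [heq]; exact hsmem
  have himg : φ s ∈ Algebra.adjoin ℂ
      (φ '' {T 2 + T (-2) + 2 * (T 1 + T (-1)), 2 + 2 * T 3 + 2 * T (-3)}) := by
    rw [← AlgHom.map_adjoin]; exact ⟨s, hsin, rfl⟩
  have hbot : Algebra.adjoin ℂ
      (φ '' {T 2 + T (-2) + 2 * (T 1 + T (-1)), 2 + 2 * T 3 + 2 * T (-3)}) ≤ ⊥ := by
    apply Algebra.adjoin_le
    rintro x ⟨y, hy, rfl⟩
    simp only [Set.mem_insert_iff, Set.mem_singleton_iff] at hy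
    rcases hy with rfl | rfl
    · rw [φ_g1]; exact ⟨-3, rfl⟩
    · rw [φ_g2]; exact ⟨6, rfl⟩
  obtain ⟨r, hr⟩ := hbot himg
  have hzero : (φ s).snd = 0 := by
    rw [← hr]
    show (algebraMap ℂ (DualNumber ℂ) r).snd = 0
    rw [algebraMap_eq_inl]; simp
  rw [hs_def, map_add, φ_T1, φ_Tm1] at hzero
  simp only [uu, vv, snd_add, snd_inl, snd_inr] at hzero
  apply hcc1
  linear_combination -hzero

end
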